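/- Let P_{XY} be a distribution on finite X × Y, Q_Y a distribution on Y, ε ∈ (0,1), and c := D_s^ε(P_{XY}‖P_X × Q_Y). For each x with P_X(x) > 0, let Good_x := {y : P_{Y|X=x}(y) ≤ 2^c Q_Y(y)} and ε_x := Pr_{y←P_{Y|X=x}}[y ∉ Good_x]. Define P'_{XY}(x,y) := P_X(x)·(P_{Y|X=x}(y)·1[y ∈ Good_x] + ε_x Q_Y(y)). Then P'_{XY} is a probability distribution with marginal P'_X = P_X, T(P_{XY}, P'_{XY}) ≤ ε, and P'_{XY} ≤ (2^c + 1)·P_X × Q_Y pointwise. -/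

import Mathlib

open scoped BigOperators
open Classical Real

noncomputable def Tv {α : Type*} [Fintype α] (P Q : α → ℝ) : ℝ :=
  (1/2) * ∑ x, |P x - Q x| + (1/2) * |∑ x, P x - ∑ x, Q x|

noncomputable def Dmax {α : Type*} [Fintype α] (P R : α → ℝ) : ℝ :=
  Real.logb 2 (sInf {l : ℝ | ∀ x, P x ≤ l * R x})

noncomputable def Ds {α : Type*} [Fintype α] (ε : ℝ) (P R : α → ℝ) : ℝ :=
  sInf {a : ℝ | (∑ x, if (2:ℝ) ^ a * R x < P x then P x else 0) < ε}

theorem stmt6 {X Y : Type*} [Fintype X] [Fintype Y] (P : X × Y → ℝ) (Q : Y → ℝ)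
    (ε c : ℝ)
    (hP : ∀ p, 0 ≤ P p) (hP1 : ∑ p, P p = 1)
    (hQ : ∀ y, 0 ≤ Q y) (hQ1 : ∑ y, Q y = 1)
    (hε : 0 < ε) (hε1 : ε < 1)
    (PX : X → ℝ) (hPX : ∀ x, PX x = ∑ y, P (x, y))
    -- total tail mass at most ε (definition of c = D_s^ε)
    (htail : (∑ p : X × Y, if (2:ℝ) ^ c * (PX p.1 * Q p.2) < P p then P p else 0) ≤ ε)
    (εx : X → ℝ)
    (hεx : ∀ x, εx x = (1 / PX x) *
      ∑ y, if (2:ℝ) ^ c * (PX x * Q y) < P (x, y) then P (x, y) else 0)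
    (P' : X × Y → ℝ)
    (hP'def : ∀ p : X × Y,
      P' p = (if P p ≤ (2:ℝ) ^ c * (PX p.1 * Q p.2) then P p else 0) + PX p.1 * εx p.1 * Q p.2) :
    (∀ p, 0 ≤ P' p) ∧ (∑ p, P' p = 1) ∧
    (∀ x, ∑ y, P' (x, y) = PX x) ∧
    Tv P P' ≤ ε ∧
    (∀ p : X × Y, P' p ≤ ((2:ℝ) ^ c + 1) * (PX p.1 * Q p.2)) := by
  have hPXnn : ∀ x, 0 ≤ PX x := by
    intro x; rw [hPX]; exact Finset.sum_nonneg fun y _ => hP _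
  set tail : X → ℝ := fun x =>
    ∑ y, if (2:ℝ) ^ c * (PX x * Q y) < P (x, y) then P (x, y) else 0 with htaildef
  have htailnn : ∀ x, 0 ≤ tail x := by
    intro x
    exact Finset.sum_nonneg fun y _ => by split_ifs with h; exact hP _; exact le_rfl
  have htaille : ∀ x, tail x ≤ PX x := by
    intro x; rw [hPX]
    exact Finset.sum_le_sum fun y _ => by split_ifs with h; exact le_rfl; exact hP _
  have hεxnn : ∀ x, 0 ≤ εx x := by
    intro x; rw [hεx]
    exact mul_nonneg (one_div_nonneg.mpr (hPXnn x)) (htailnn x)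
  have hεx1 : ∀ x, εx x ≤ 1 := by
    intro x; rw [hεx]
    rcases eq_or_lt_of_le (hPXnn x) with h | h
    · rw [← h]; simp
    · rw [one_div, inv_mul_le_iff₀ h, mul_one]; exact htaille x
  have hkey : ∀ x, PX x * εx x = tail x := by
    intro x
    rcases eq_or_lt_of_le (hPXnn x) with h | h
    · rw [← h, zero_mul]
      have h0 := htaille x
      rw [← h] at h0
      exact (le_antisymm h0 (htailnn x)).symm
    · rw [hεx, one_div, ← mul_assoc, mul_inv_cancel₀ h.ne', one_mul]
  -- rewrite P' pointwise
  have hP'alt : ∀ p : X × Y, P' p =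
      (P p - (if (2:ℝ) ^ c * (PX p.1 * Q p.2) < P p then P p else 0)) +
        PX p.1 * εx p.1 * Q p.2 := by
    intro p
    rw [hP'def]
    congr 1
    by_cases h : P p ≤ (2:ℝ) ^ c * (PX p.1 * Q p.2)
    · rw [if_pos h, if_neg (not_lt.mpr h)]; ring
    · rw [if_neg h, if_pos (lt_of_not_ge h)]; ring
  have hrow : ∀ x, ∑ y, P' (x, y) = PX x := by
    intro x
    calc ∑ y, P' (x, y)
        = ∑ y, ((P (x, y) - (if (2:ℝ) ^ c * (PX x * Q y) < P (x, y) then P (x, y) else 0))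
            + PX x * εx x * Q y) := Finset.sum_congr rfl fun y _ => hP'alt (x, y)
      _ = (∑ y, P (x, y)) - tail x + PX x * εx x * ∑ y, Q y := by
          rw [Finset.sum_add_distrib, Finset.sum_sub_distrib, ← Finset.mul_sum, htaildef]
      _ = PX x := by rw [hQ1, ← hPX, hkey]; ring
  have hsum1 : ∑ p, P' p = 1 := by
    rw [Fintype.sum_prod_type]
    calc (∑ x, ∑ y, P' (x, y)) = ∑ x, PX x := Finset.sum_congr rfl fun x _ => hrow x
      _ = ∑ x, ∑ y, P (x, y) := Finset.sum_congr rfl fun x _ => hPX x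
      _ = 1 := by rw [← Fintype.sum_prod_type]; exact hP1
  have htail' : ∑ x, tail x ≤ ε := by
    rw [htaildef]; rw [Fintype.sum_prod_type] at htail; exact htail
  refine ⟨?_, hsum1, hrow, ?_, ?_⟩
  · intro p
    rw [hP'def]
    have h1 : 0 ≤ (if P p ≤ (2:ℝ) ^ c * (PX p.1 * Q p.2) then P p else 0) := by
      split_ifs with h; exact hP _; exact le_rfl
    have h2 : 0 ≤ PX p.1 * εx p.1 * Q p.2 :=
      mul_nonneg (mul_nonneg (hPXnn _) (hεxnn _)) (hQ _)
    linarith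
  · -- Tv bound
    unfold Tv
    rw [hP1, hsum1, sub_self, abs_zero, mul_zero, add_zero]
    have hbound : ∀ p : X × Y, |P p - P' p| ≤
        (if (2:ℝ) ^ c * (PX p.1 * Q p.2) < P p then P p else 0) + PX p.1 * εx p.1 * Q p.2 := by
      intro p
      have h1 : 0 ≤ (if (2:ℝ) ^ c * (PX p.1 * Q p.2) < P p then P p else 0) := by
        split_ifs with h; exact hP _; exact le_rfl
      have h2 : 0 ≤ PX p.1 * εx p.1 * Q p.2 :=
        mul_nonneg (mul_nonneg (hPXnn _) (hεxnn _)) (hQ _)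
      rw [hP'alt]
      have : P p - ((P p - (if (2:ℝ) ^ c * (PX p.1 * Q p.2) < P p then P p else 0))
          + PX p.1 * εx p.1 * Q p.2)
          = (if (2:ℝ) ^ c * (PX p.1 * Q p.2) < P p then P p else 0)
            - PX p.1 * εx p.1 * Q p.2 := by ring
      rw [this]
      exact abs_le.mpr ⟨by linarith, by linarith⟩
    have hsumabs : ∑ p, |P p - P' p| ≤ 2 * ∑ x, tail x := by
      calc ∑ p, |P p - P' p|
          ≤ ∑ p : X × Y, ((if (2:ℝ) ^ c * (PX p.1 * Q p.2) < P p then P p else 0)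
              + PX p.1 * εx p.1 * Q p.2) := Finset.sum_le_sum fun p _ => hbound p
        _ = (∑ x, tail x) + ∑ x, PX x * εx x := by
            rw [Finset.sum_add_distrib, Fintype.sum_prod_type, Fintype.sum_prod_type]
            congr 1
            refine Finset.sum_congr rfl fun x _ => ?_
            simp only [← Finset.mul_sum, hQ1, mul_one]
        _ = 2 * ∑ x, tail x := by
            rw [Finset.sum_congr rfl fun x _ => hkey x]; ring
    linarith
  · intro p
    rw [hP'def]
    have h2 : PX p.1 * εx p.1 * Q p.2 ≤ PX p.1 * Q p.2 := by
      have := mul_le_of_le_one_right (hPXnn p.1) (hεx1 p.1)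
      exact mul_le_mul_of_nonneg_right this (hQ _)
    have h1 : (if P p ≤ (2:ℝ) ^ c * (PX p.1 * Q p.2) then P p else 0)
        ≤ (2:ℝ) ^ c * (PX p.1 * Q p.2) := by
      split_ifs with h
      · exact h
      · exact mul_nonneg (by positivity) (mul_nonneg (hPXnn _) (hQ _))
    calc (if P p ≤ (2:ℝ) ^ c * (PX p.1 * Q p.2) then P p else 0) + PX p.1 * εx p.1 * Q p.2
        ≤ (2:ℝ) ^ c * (PX p.1 * Q p.2) + PX p.1 * Q p.2 := add_le_add h1 h2
      _ = ((2:ℝ) ^ c + 1) * (PX p.1 * Q p.2) := by ring
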